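/- Let (A, B) be a proper Hessenberg pair in ℂ^{n×n}. Then for every k with 1 ≤ k ≤ n−1, the span of the first k columns of A differs from the span of the first k columns of B. -/

import Mathlib

open Matrix

/-- A matrix is upper Hessenberg if all entries below the first subdiagonal vanish. -/
def UpperHessenberg {n : ℕ} (A : Matrix (Fin n) (Fin n) ℂ) : Prop :=
  ∀ i j : Fin n, (j : ℕ) + 1 < (i : ℕ) → A i j = 0

/-- A proper Hessenberg pair: both matrices upper Hessenberg, no subdiagonal position with
both entries zero, linearly independent first columns and linearly independent last rows. -/
def ProperHessPair {n : ℕ} (A B : Matrix (Fin (n + 1)) (Fin (n + 1)) ℂ) : Prop :=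
  UpperHessenberg A ∧ UpperHessenberg B ∧
    (∀ i j : Fin (n + 1), (i : ℕ) = (j : ℕ) + 1 → ¬(A i j = 0 ∧ B i j = 0)) ∧
    LinearIndependent ℂ ![fun i => A i 0, fun i => B i 0] ∧
    LinearIndependent ℂ ![fun j => A (Fin.last n) j, fun j => B (Fin.last n) j]

lemma eval_zero_of_mem_span {ι : Type*} {m : ℕ} (v : ι → Fin m → ℂ) (r : Fin m)
    (hv : ∀ j, v j r = 0) {x : Fin m → ℂ} (hx : x ∈ Submodule.span ℂ (Set.range v)) :
    x r = 0 := by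
  have hle : Submodule.span ℂ (Set.range v) ≤
      LinearMap.ker (LinearMap.proj (R := ℂ) (φ := fun _ : Fin m => ℂ) r) := by
    rw [Submodule.span_le]
    rintro _ ⟨j, rfl⟩
    simpa using hv j
  simpa using hle hx

lemma mem_span_init {k m : ℕ} (v : Fin (k + 1) → Fin m → ℂ) (r : Fin m)
    (hv : ∀ j : Fin k, v j.castSucc r = 0) (hlast : v (Fin.last k) r ≠ 0)
    {x : Fin m → ℂ} (hx : x ∈ Submodule.span ℂ (Set.range v)) (hxr : x r = 0) :
    x ∈ Submodule.span ℂ (Set.range (v ∘ Fin.castSucc)) := by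
  obtain ⟨c, hc⟩ := (Submodule.mem_span_range_iff_exists_fun ℂ).1 hx
  have heval : c (Fin.last k) * v (Fin.last k) r = 0 := by
    have h1 := congrFun hc r
    rw [Finset.sum_apply] at h1
    simp only [Pi.smul_apply, smul_eq_mul] at h1
    rw [Fin.sum_univ_castSucc] at h1
    simp only [hv, mul_zero, Finset.sum_const_zero, zero_add] at h1
    rw [h1, hxr]
  have hclast : c (Fin.last k) = 0 := by
    rcases mul_eq_zero.1 heval with h' | h'
    · exact h'
    · exact absurd h' hlast
  have hxsum : x = ∑ j : Fin k, c j.castSucc • v j.castSucc := by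
    rw [← hc, Fin.sum_univ_castSucc, hclast, zero_smul, add_zero]
  rw [hxsum]
  exact Submodule.sum_mem _ fun j _ =>
    Submodule.smul_mem _ _ (Submodule.subset_span ⟨j, rfl⟩)

lemma properHessPair_aux {n : ℕ}
    (A B : Matrix (Fin (n + 1)) (Fin (n + 1)) ℂ)
    (h : ProperHessPair A B) :
    ∀ k, 1 ≤ k → k ≤ n → ∀ (hc : k ≤ n + 1),
      Submodule.span ℂ
          (Set.range fun j : Fin k => fun i => A i (Fin.castLE hc j)) ≠
        Submodule.span ℂ
          (Set.range fun j : Fin k => fun i => B i (Fin.castLE hc j)) := by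
  obtain ⟨hA, hB, hsub, hcol, hrow⟩ := h
  intro k hk1
  induction k, hk1 using Nat.le_induction with
  | base =>
    intro hkn hc heq
    -- k = 1 case
    have h0 : Fin.castLE hc (0 : Fin 1) = (0 : Fin (n + 1)) := by
      ext; simp
    have hrangeA : (Set.range fun j : Fin 1 => fun i => A i (Fin.castLE hc j)) =
        {fun i => A i 0} := by
      rw [Set.range_unique]
      simp [h0]
    have hrangeB : (Set.range fun j : Fin 1 => fun i => B i (Fin.castLE hc j)) =
        {fun i => B i 0} := by
      rw [Set.range_unique]
      simp [h0]
    rw [hrangeA, hrangeB] at heq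
    have hbmem : (fun i => B i 0) ∈ Submodule.span ℂ ({fun i => A i 0} : Set (Fin (n+1) → ℂ)) := by
      rw [heq]
      exact Submodule.subset_span rfl
    obtain ⟨c, hceq⟩ := Submodule.mem_span_singleton.1 hbmem
    have hli := linearIndependent_fin2.1 hcol
    have hb0 : (fun i => B i 0) ≠ 0 := by simpa using hli.1
    have hcne : c ≠ 0 := by
      rintro rfl
      rw [zero_smul] at hceq
      exact hb0 hceq.symm
    have := hli.2 c⁻¹
    apply this
    show c⁻¹ • (fun i => B i 0) = fun i => A i 0
    rw [← hceq, smul_smul, inv_mul_cancel₀ hcne, one_smul]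
  | succ k hk ih =>
    intro hkn hc heq
    have hkn' : k ≤ n := le_trans (Nat.le_succ k) hkn
    have hc' : k ≤ n + 1 := by omega
    set r : Fin (n + 1) := ⟨k + 1, by omega⟩ with hr
    set ck : Fin (n + 1) := ⟨k, by omega⟩ with hck
    -- composition fact
    have hcomp :
        ((fun j : Fin (k+1) => fun i => A i (Fin.castLE hc j)) ∘ Fin.castSucc) =
        (fun j : Fin k => fun i => A i (Fin.castLE hc' j)) := by
      rfl
    have hcompB :
        ((fun j : Fin (k+1) => fun i => B i (Fin.castLE hc j)) ∘ Fin.castSucc) =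
        (fun j : Fin k => fun i => B i (Fin.castLE hc' j)) := by
      rfl
    have hlastA : Fin.castLE hc (Fin.last k) = ck := by ext; simp [hck]
    -- A columns with index < k vanish at r
    have hvA : ∀ j : Fin k, (fun i => A i (Fin.castLE hc (Fin.castSucc j))) r = 0 := by
      intro j
      have hj := j.isLt
      exact hA r _ (show (j : ℕ) + 1 < k + 1 by omega)
    have hvB : ∀ j : Fin k, (fun i => B i (Fin.castLE hc (Fin.castSucc j))) r = 0 := by
      intro j
      have hj := j.isLt
      exact hB r _ (show (j : ℕ) + 1 < k + 1 by omega)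
    have hnotboth : ¬(A r ck = 0 ∧ B r ck = 0) := hsub r ck rfl
    -- subdiagonal entries nonzero
    have hBsub : B r ck ≠ 0 := by
      intro hB0
      -- then all B columns vanish at r, so A's last column (in span B) vanishes at r
      have hvB' : ∀ j : Fin (k + 1), (fun i => B i (Fin.castLE hc j)) r = 0 := by
        intro j
        induction j using Fin.lastCases with
        | last => show B r (Fin.castLE hc (Fin.last k)) = 0; rw [hlastA]; exact hB0
        | cast j => exact hvB j
      have hamem : (fun i => A i ck) ∈
          Submodule.span ℂ (Set.range fun j : Fin (k+1) => fun i => B i (Fin.castLE hc j)) := by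
        rw [← heq]
        refine Submodule.subset_span ⟨Fin.last k, ?_⟩
        show (fun i => A i (Fin.castLE hc (Fin.last k))) = fun i => A i ck
        rw [hlastA]
      have := eval_zero_of_mem_span _ r hvB' hamem
      exact hnotboth ⟨this, hB0⟩
    have hAsub : A r ck ≠ 0 := by
      intro hA0
      have hvA' : ∀ j : Fin (k + 1), (fun i => A i (Fin.castLE hc j)) r = 0 := by
        intro j
        induction j using Fin.lastCases with
        | last => show A r (Fin.castLE hc (Fin.last k)) = 0; rw [hlastA]; exact hA0
        | cast j => exact hvA j
      have hbmem : (fun i => B i ck) ∈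
          Submodule.span ℂ (Set.range fun j : Fin (k+1) => fun i => A i (Fin.castLE hc j)) := by
        rw [heq]
        refine Submodule.subset_span ⟨Fin.last k, ?_⟩
        show (fun i => B i (Fin.castLE hc (Fin.last k))) = fun i => B i ck
        rw [hlastA]
      have := eval_zero_of_mem_span _ r hvA' hbmem
      exact hnotboth ⟨hA0, this⟩
    -- spans of first k columns agree
    apply ih hkn' hc'
    apply le_antisymm
    · rw [Submodule.span_le]
      rintro _ ⟨j, rfl⟩
      have hxA : (fun i => A i (Fin.castLE hc' j)) ∈
          Submodule.span ℂ (Set.range fun j : Fin (k+1) => fun i => A i (Fin.castLE hc j)) := by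
        exact Submodule.subset_span ⟨Fin.castSucc j, rfl⟩
      rw [heq] at hxA
      have hxr : (fun i => A i (Fin.castLE hc' j)) r = 0 := by
        have hj := j.isLt
        exact hA r _ (show (j : ℕ) + 1 < k + 1 by omega)
      have := mem_span_init _ r hvB (show (fun i => B i (Fin.castLE hc (Fin.last k))) r ≠ 0 by rw [hlastA]; exact hBsub) hxA hxr
      rwa [hcompB] at this
    · rw [Submodule.span_le]
      rintro _ ⟨j, rfl⟩
      have hxB : (fun i => B i (Fin.castLE hc' j)) ∈
          Submodule.span ℂ (Set.range fun j : Fin (k+1) => fun i => B i (Fin.castLE hc j)) := by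
        exact Submodule.subset_span ⟨Fin.castSucc j, rfl⟩
      rw [← heq] at hxB
      have hxr : (fun i => B i (Fin.castLE hc' j)) r = 0 := by
        have hj := j.isLt
        exact hB r _ (show (j : ℕ) + 1 < k + 1 by omega)
      have := mem_span_init _ r hvA (show (fun i => A i (Fin.castLE hc (Fin.last k))) r ≠ 0 by rw [hlastA]; exact hAsub) hxB hxr
      rwa [hcomp] at this

/-- The span of the first k columns of A differs from the span of the first k columns of B,
for every 1 ≤ k ≤ n − 1 (where the matrices are of size (n+1) × (n+1)). -/
theorem properHessPair_column_spans_differ {n : ℕ}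
    (A B : Matrix (Fin (n + 1)) (Fin (n + 1)) ℂ)
    (h : ProperHessPair A B)
    (k : ℕ) (hk1 : 1 ≤ k) (hkn : k ≤ n) :
    Submodule.span ℂ
        (Set.range fun j : Fin k => fun i => A i (Fin.castLE (by omega) j)) ≠
      Submodule.span ℂ
        (Set.range fun j : Fin k => fun i => B i (Fin.castLE (by omega) j)) := by
  exact properHessPair_aux A B h k hk1 hkn (by omega)
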